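/- arXiv:2402.03004 — 2 statements merged into one kernel-verified Lean document; each statement's English description precedes it below -/
import Mathlib

section
/- Let J ≥ 1, let Σ₀ and Σ₁ be symmetric positive definite J×J real matrices, let δ ∈ ℝ^J, γ ∈ ℝ^J, and set Γ = diag(exp(−γ₁), …, exp(−γ_J)). For j = 1,…,J let h_j : ℝ → ℝ be differentiable with h'_j(y) > 0 for all y, and define h₀(y) = h(y) = (h₁(y₁),…,h_J(y_J))ᵀ and h₁(y) = Γ(h(y) − δ), with corresponding densities f_d(y) = φ_{0,Σ_d}(h_d(y)) · ∏_{j=1}^J h'_{dj}(y_j), where h'_{0j} = h'_j and h'_{1j} = exp(−γ_j) h'_j. Assume the symmetric matrix A = Γ Σ₁⁻¹ Γ − Σ₀⁻¹ is invertible and set β = (I + (Σ₀ A)⁻¹) δ. Then for every y ∈ ℝ^J, log(f₁(y)/f₀(y)) = −(1/2)·(h(y) − β)ᵀ A (h(y) − β) + c, where c = −(1/2)·( log(det Σ₁ / det Σ₀) − δᵀ Σ₀⁻¹ (I + (Σ₀ A)⁻¹) δ ) − ∑_{j=1}^J γ_j. -/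
open Matrix MeasureTheory

/-- The centered multivariate normal density on `ℝ^J` with covariance matrix `Sig`. -/
noncomputable def mvnPdf {J : ℕ} (Sig : Matrix (Fin J) (Fin J) ℝ) (z : Fin J → ℝ) : ℝ :=
  (2 * Real.pi) ^ (-(J : ℝ) / 2) * Sig.det ^ (-(1 : ℝ) / 2) *
    Real.exp (-(1 / 2 : ℝ) * (z ⬝ᵥ Sig⁻¹.mulVec z))

private lemma dotmv_symm {J : ℕ} (N : Matrix (Fin J) (Fin J) ℝ) (hN : Nᵀ = N)
    (u v : Fin J → ℝ) : u ⬝ᵥ N *ᵥ v = v ⬝ᵥ N *ᵥ u := by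
  rw [Matrix.dotProduct_mulVec, show u ᵥ* N = N *ᵥ u by
    conv_lhs => rw [← hN, Matrix.vecMul_transpose], dotProduct_comm]

private lemma mv_dot {J : ℕ} (N : Matrix (Fin J) (Fin J) ℝ) (u x : Fin J → ℝ) :
    (N *ᵥ u) ⬝ᵥ x = u ⬝ᵥ Nᵀ *ᵥ x := by
  rw [Matrix.mulVec_transpose, dotProduct_comm (N *ᵥ u) x,
    Matrix.dotProduct_mulVec, dotProduct_comm]

private lemma quadKey {J : ℕ} (S0 M A B : Matrix (Fin J) (Fin J) ℝ)
    (hS0 : S0ᵀ = S0) (hM : Mᵀ = M) (hA : Aᵀ = A)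
    (hAMS : A = M - S0) (hAinv : IsUnit A.det)
    (hB : B = 1 + A⁻¹ * S0)
    (z δ : Fin J → ℝ) :
    (z - δ) ⬝ᵥ M *ᵥ (z - δ) - z ⬝ᵥ S0 *ᵥ z
      = (z - B *ᵥ δ) ⬝ᵥ A *ᵥ (z - B *ᵥ δ) - δ ⬝ᵥ (S0 * B) *ᵥ δ := by
  have hAB : A * B = M := by
    rw [hB, Matrix.mul_add, Matrix.mul_one, ← Matrix.mul_assoc,
      Matrix.mul_nonsing_inv A hAinv, Matrix.one_mul, hAMS, sub_add_cancel]
  have hMAS : M = A + S0 := by rw [hAMS]; abel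
  have hAinvM : A⁻¹ * M = B := by
    rw [hMAS, Matrix.mul_add, Matrix.nonsing_inv_mul A hAinv, hB]
  have hAinvT : A⁻¹ᵀ = A⁻¹ := by rw [Matrix.transpose_nonsing_inv, hA]
  have hBT : Bᵀ = 1 + S0 * A⁻¹ := by
    rw [hB, Matrix.transpose_add, Matrix.transpose_one, Matrix.transpose_mul, hS0, hAinvT]
  have hBTM : Bᵀ * M = M + S0 * B := by
    rw [hBT, Matrix.add_mul, Matrix.one_mul, Matrix.mul_assoc, hAinvM]
  have hAw : A *ᵥ (B *ᵥ δ) = M *ᵥ δ := by rw [Matrix.mulVec_mulVec, hAB]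
  have h1 : z ⬝ᵥ A *ᵥ z = z ⬝ᵥ M *ᵥ z - z ⬝ᵥ S0 *ᵥ z := by
    rw [hAMS, Matrix.sub_mulVec, dotProduct_sub]
  have h2 : z ⬝ᵥ A *ᵥ (B *ᵥ δ) = z ⬝ᵥ M *ᵥ δ := by rw [hAw]
  have h3 : (B *ᵥ δ) ⬝ᵥ A *ᵥ z = z ⬝ᵥ M *ᵥ δ := by rw [dotmv_symm A hA, h2]
  have h4 : (B *ᵥ δ) ⬝ᵥ A *ᵥ (B *ᵥ δ) = δ ⬝ᵥ M *ᵥ δ + δ ⬝ᵥ (S0 * B) *ᵥ δ := by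
    rw [hAw, mv_dot, Matrix.mulVec_mulVec, hBTM, Matrix.add_mulVec, dotProduct_add]
  have h5 : δ ⬝ᵥ M *ᵥ z = z ⬝ᵥ M *ᵥ δ := dotmv_symm M hM δ z
  simp only [Matrix.mulVec_sub, dotProduct_sub, sub_dotProduct]
  linarith

/-- Proposition 2, lsTDA log-likelihood ratio in quadratic form. -/
theorem stmt1 {J : ℕ} (hJ : 1 ≤ J)
    (Sig0 Sig1 : Matrix (Fin J) (Fin J) ℝ)
    (hSig0 : Sig0.PosDef) (hSig1 : Sig1.PosDef)
    (δ γ : Fin J → ℝ)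
    (Γ : Matrix (Fin J) (Fin J) ℝ)
    (hΓ : Γ = Matrix.diagonal fun j => Real.exp (-(γ j)))
    (h h' : Fin J → ℝ → ℝ)
    (hderiv : ∀ j y, HasDerivAt (h j) (h' j y) y)
    (hpos : ∀ j y, 0 < h' j y)
    (A : Matrix (Fin J) (Fin J) ℝ) (hAdef : A = Γ * Sig1⁻¹ * Γ - Sig0⁻¹)
    (hAsymm : A.IsSymm) (hAinv : IsUnit A.det)
    (β : Fin J → ℝ) (hβ : β = (1 + (Sig0 * A)⁻¹).mulVec δ)
    (f0 f1 : (Fin J → ℝ) → ℝ)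
    (hf0 : ∀ y, f0 y = mvnPdf Sig0 (fun j => h j (y j)) * ∏ j, h' j (y j))
    (hf1 : ∀ y, f1 y =
      mvnPdf Sig1 (Γ.mulVec ((fun j => h j (y j)) - δ)) *
        ∏ j, Real.exp (-(γ j)) * h' j (y j))
    (c : ℝ)
    (hc : c = -(1 / 2 : ℝ) * (Real.log (Sig1.det / Sig0.det)
            - δ ⬝ᵥ (Sig0⁻¹ * (1 + (Sig0 * A)⁻¹)).mulVec δ) - ∑ j, γ j) :
    ∀ y : Fin J → ℝ,
      Real.log (f1 y / f0 y) =
        -(1 / 2 : ℝ) *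
            (((fun j => h j (y j)) - β) ⬝ᵥ A.mulVec ((fun j => h j (y j)) - β)) + c := by
  intro y
  set z : Fin J → ℝ := fun j => h j (y j) with hz
  have hΓT : Γᵀ = Γ := by rw [hΓ, Matrix.diagonal_transpose]
  have h1T : Sig1ᵀ = Sig1 := hSig1.isHermitian
  have h0T : Sig0ᵀ = Sig0 := hSig0.isHermitian
  have hS1T : Sig1⁻¹ᵀ = Sig1⁻¹ := by rw [Matrix.transpose_nonsing_inv, h1T]
  have hS0T : (Sig0⁻¹)ᵀ = Sig0⁻¹ := by rw [Matrix.transpose_nonsing_inv, h0T]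
  have hMT : (Γ * Sig1⁻¹ * Γ)ᵀ = Γ * Sig1⁻¹ * Γ := by
    rw [Matrix.transpose_mul, Matrix.transpose_mul, hΓT, hS1T, Matrix.mul_assoc]
  have hS0det : IsUnit Sig0.det := isUnit_iff_ne_zero.mpr (ne_of_gt hSig0.det_pos)
  have hBdef : (1 : Matrix (Fin J) (Fin J) ℝ) + (Sig0 * A)⁻¹ = 1 + A⁻¹ * Sig0⁻¹ := by
    rw [Matrix.mul_inv_rev]
  -- the quadratic-form identity
  have key := quadKey Sig0⁻¹ (Γ * Sig1⁻¹ * Γ) A (1 + (Sig0 * A)⁻¹)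
    hS0T hMT hAsymm hAdef hAinv hBdef z δ
  -- rewrite the Γ quadratic form
  have hq1 : Γ *ᵥ (z - δ) ⬝ᵥ Sig1⁻¹ *ᵥ (Γ *ᵥ (z - δ))
      = (z - δ) ⬝ᵥ (Γ * Sig1⁻¹ * Γ) *ᵥ (z - δ) := by
    rw [Matrix.mulVec_mulVec, mv_dot, hΓT, Matrix.mulVec_mulVec, ← Matrix.mul_assoc]
  -- products
  have hP : (0 : ℝ) < ∏ j, h' j (y j) := Finset.prod_pos fun j _ => hpos j (y j)
  have hprod1 : (∏ j, Real.exp (-(γ j)) * h' j (y j))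
      = Real.exp (-∑ j, γ j) * ∏ j, h' j (y j) := by
    rw [Finset.prod_mul_distrib, ← Real.exp_sum, Finset.sum_neg_distrib]
  have hC : (0 : ℝ) < (2 * Real.pi) ^ (-(J : ℝ) / 2) :=
    Real.rpow_pos_of_pos (by positivity) _
  -- rewrite f0 and f1 as common factor times exponentials
  have e0 : f0 y = ((2 * Real.pi) ^ (-(J : ℝ) / 2) * ∏ j, h' j (y j)) *
      Real.exp (Real.log Sig0.det * (-(1 : ℝ) / 2) + -(1 / 2 : ℝ) * (z ⬝ᵥ Sig0⁻¹ *ᵥ z)) := by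
    rw [hf0, mvnPdf, Real.rpow_def_of_pos hSig0.det_pos, Real.exp_add]
    ring
  have e1 : f1 y = ((2 * Real.pi) ^ (-(J : ℝ) / 2) * ∏ j, h' j (y j)) *
      Real.exp (Real.log Sig1.det * (-(1 : ℝ) / 2)
        + -(1 / 2 : ℝ) * ((z - δ) ⬝ᵥ (Γ * Sig1⁻¹ * Γ) *ᵥ (z - δ))
        + -∑ j, γ j) := by
    rw [hf1, mvnPdf, Real.rpow_def_of_pos hSig1.det_pos, hprod1]
    show _ * _ * Real.exp (-(1 / 2 : ℝ) * (Γ *ᵥ (z - δ) ⬝ᵥ Sig1⁻¹ *ᵥ (Γ *ᵥ (z - δ)))) * _ = _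
    rw [hq1, Real.exp_add, Real.exp_add]
    ring
  have hK : ((2 * Real.pi) ^ (-(J : ℝ) / 2) * ∏ j, h' j (y j)) ≠ 0 :=
    ne_of_gt (mul_pos hC hP)
  rw [e1, e0, mul_div_mul_left _ _ hK, ← Real.exp_sub, Real.log_exp]
  -- final scalar computation
  rw [hc, Real.log_div (ne_of_gt hSig1.det_pos) (ne_of_gt hSig0.det_pos), hβ]
  linarith [key]
end

section
/- Let δ ∈ ℝ with δ ≠ 0, let F(z) = 1/(1 + e^{−z}) denote the standard logistic cumulative distribution function and f(z) = e^{−z}/(1 + e^{−z})² its density. Then ∫_ℝ F(z) · f(z − δ) dz = exp(δ) · ( exp(δ) − 1 − δ ) / ( exp(δ) − 1 )². That is, if L₀ and L₁ are independent with standard logistic distributions shifted so that L₁ = L₀' + δ for an independent standard logistic L₀', then P(L₁ > L₀) = exp(δ)(exp(δ) − 1 − δ)/(exp(δ) − 1)². -/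
open MeasureTheory Real Filter Set Topology

/-- closed-form AUC for the logistic location-shift model:
with `F` the standard logistic CDF and `f` its density,
`∫ F(z) f(z − δ) dz = e^δ (e^δ − 1 − δ) / (e^δ − 1)²`. -/
theorem stmt15 (δ : ℝ) (hδ : δ ≠ 0) :
    (∫ z : ℝ,
        (1 / (1 + Real.exp (-z))) *
          (Real.exp (-(z - δ)) / (1 + Real.exp (-(z - δ))) ^ 2))
      = Real.exp δ * (Real.exp δ - 1 - δ) / (Real.exp δ - 1) ^ 2 := by
  set b := Real.exp δ with hb
  have hb0 : 0 < b := Real.exp_pos δ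
  have hb1 : b ≠ 1 := by
    rw [hb]; intro h; exact hδ (by rwa [← Real.exp_zero, Real.exp_eq_exp] at h)
  have hbm1 : b - 1 ≠ 0 := sub_ne_zero.mpr hb1
  set f' : ℝ → ℝ := fun z =>
    (1 / (1 + Real.exp (-z))) * (Real.exp (-(z - δ)) / (1 + Real.exp (-(z - δ))) ^ 2) with hf'
  have hexp : ∀ z : ℝ, Real.exp (-(z - δ)) = b * Real.exp (-z) := fun z => by
    rw [hb, ← Real.exp_add]; ring_nf
  have hpos1 : ∀ z : ℝ, (0:ℝ) < 1 + Real.exp (-z) := fun z => by positivity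
  have hpos2 : ∀ z : ℝ, (0:ℝ) < 1 + b * Real.exp (-z) := fun z => by positivity
  have hf'eq : ∀ z : ℝ, f' z =
      b * Real.exp (-z) / ((1 + Real.exp (-z)) * (1 + b * Real.exp (-z)) ^ 2) := fun z => by
    rw [hf']; simp only [hexp z]
    rw [div_mul_div_comm, one_mul]
  -- antiderivative
  set G : ℝ → ℝ := fun z =>
    b / (b - 1) ^ 2 * (Real.log (1 + b * Real.exp (-z)) - Real.log (1 + Real.exp (-z)))
      + b / (b - 1) * (1 + b * Real.exp (-z))⁻¹ with hG
  have hderiv : ∀ z : ℝ, HasDerivAt G (f' z) z := by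
    intro z
    have he : HasDerivAt (fun z : ℝ => Real.exp (-z)) (Real.exp (-z) * (-1)) z :=
      ((hasDerivAt_id z).neg).exp
    have h1 : HasDerivAt (fun z : ℝ => 1 + b * Real.exp (-z))
        (b * (Real.exp (-z) * (-1))) z := ((he.const_mul b).const_add 1)
    have h2 : HasDerivAt (fun z : ℝ => 1 + Real.exp (-z)) (Real.exp (-z) * (-1)) z :=
      he.const_add 1
    have HD := (((h1.log (hpos2 z).ne').sub (h2.log (hpos1 z).ne')).const_mul
        (b / (b - 1) ^ 2)).add ((h1.inv (hpos2 z).ne').const_mul (b / (b - 1)))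
    refine HD.congr_deriv ?_
    rw [hf'eq z]
    have e1 := (hpos1 z).ne'
    have e2 := (hpos2 z).ne'
    field_simp
    ring
  -- integrability
  have hcont : Continuous f' := by
    apply Continuous.mul
    · exact continuous_const.div (by continuity) (fun z => (hpos1 z).ne')
    · apply Continuous.div (by continuity) (by continuity)
      intro z
      have := hpos1 (z - δ)
      positivity
  have hint : Integrable f' := by
    rw [← integrableOn_univ, ← Set.Iic_union_Ioi (a := (0:ℝ))]
    apply IntegrableOn.union
    · -- bound by (1/b) * exp z on Iic 0
      apply Integrable.mono' ((integrableOn_exp_Iic 0).const_mul (1/b))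
      · exact hcont.aestronglyMeasurable.restrict
      · filter_upwards with z
        rw [Real.norm_eq_abs, abs_of_nonneg (by rw [hf'eq z]; positivity), hf'eq z]
        set A := Real.exp (-z) with hA
        have hA0 : 0 < A := Real.exp_pos (-z)
        have s1 : (b*A)^2 ≤ (1+b*A)^2 := by nlinarith
        have hden : (b * A) ^ 2 ≤ (1 + A) * (1 + b * A) ^ 2 := by
          nlinarith [sq_nonneg (1+b*A)]
        have hea : Real.exp z * A = 1 := by rw [hA, ← Real.exp_add]; simp
        have step1 : 1/b * Real.exp z * ((b*A)^2) = b * A := by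
          field_simp
          linear_combination hea
        rw [div_le_iff₀ (by positivity)]
        have hmm := mul_le_mul_of_nonneg_left hden
          (show (0:ℝ) ≤ 1/b * Real.exp z by positivity)
        nlinarith [hmm, step1]
    · -- bound by b * exp (-z) on Ioi 0
      apply Integrable.mono' (((exp_neg_integrableOn_Ioi 0 (one_pos))).const_mul b)
      · exact hcont.aestronglyMeasurable.restrict
      · filter_upwards with z
        rw [Real.norm_eq_abs, abs_of_nonneg (by rw [hf'eq z]; positivity), hf'eq z]
        set A := Real.exp (-z) with hA
        have hA0 : 0 < A := Real.exp_pos (-z)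
        have hden : (1:ℝ) ≤ (1 + A) * (1 + b * A) ^ 2 := by
          nlinarith [sq_nonneg (b*A), mul_pos hb0 hA0]
        rw [div_le_iff₀ (by positivity)]
        have hA1 : Real.exp (-1 * z) = A := by rw [hA]; ring_nf
        rw [hA1]
        have hmm := mul_le_mul_of_nonneg_left hden
          (show (0:ℝ) ≤ b * A from le_of_lt (mul_pos hb0 hA0))
        nlinarith [hmm]
  -- limit at +∞
  have htop : Tendsto G atTop (𝓝 (b / (b - 1))) := by
    have hc : Tendsto (fun z : ℝ => Real.exp (-z)) atTop (𝓝 0) := by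
      exact Real.tendsto_exp_atBot.comp tendsto_neg_atTop_atBot
    have hH : ContinuousAt (fun a : ℝ =>
        b / (b - 1) ^ 2 * (Real.log (1 + b * a) - Real.log (1 + a))
          + b / (b - 1) * (1 + b * a)⁻¹) 0 := by
      apply ContinuousAt.add
      · apply ContinuousAt.mul continuousAt_const
        apply ContinuousAt.sub
        · exact (Real.continuousAt_log (by norm_num)).comp (by fun_prop)
        · exact (Real.continuousAt_log (by norm_num)).comp (by fun_prop)
      · exact continuousAt_const.mul ((by fun_prop : ContinuousAt (fun a:ℝ => 1 + b*a) 0).inv₀ (by norm_num))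
    have h0 : b / (b - 1) ^ 2 * (Real.log (1 + b * 0) - Real.log (1 + 0))
        + b / (b - 1) * (1 + b * 0)⁻¹ = b / (b - 1) := by norm_num
    rw [← h0]
    exact (hH.tendsto.comp hc).congr (fun z => rfl)
  -- limit at -∞
  have hGK : ∀ z : ℝ, G z =
      b / (b - 1) ^ 2 * (Real.log (Real.exp z + b) - Real.log (Real.exp z + 1))
        + b / (b - 1) * (Real.exp z / (Real.exp z + b)) := by
    intro z
    have hez : (0:ℝ) < Real.exp z := Real.exp_pos z
    have e1 : 1 + b * Real.exp (-z) = (Real.exp z + b) / Real.exp z := by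
      rw [Real.exp_neg]; field_simp
    have e2 : 1 + Real.exp (-z) = (Real.exp z + 1) / Real.exp z := by
      rw [Real.exp_neg]; field_simp
    rw [hG]
    simp only [e1, e2]
    rw [Real.log_div (by positivity) hez.ne', Real.log_div (by positivity) hez.ne', inv_div]
    ring
  have hbot : Tendsto G atBot (𝓝 (b / (b - 1) ^ 2 * δ)) := by
    have hc : Tendsto (fun z : ℝ => Real.exp z) atBot (𝓝 0) := Real.tendsto_exp_atBot
    have hK : ContinuousAt (fun u : ℝ =>
        b / (b - 1) ^ 2 * (Real.log (u + b) - Real.log (u + 1))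
          + b / (b - 1) * (u / (u + b))) 0 := by
      apply ContinuousAt.add
      · apply ContinuousAt.mul continuousAt_const
        apply ContinuousAt.sub
        · exact (Real.continuousAt_log (by simp [hb0.ne'])).comp (by fun_prop)
        · exact (Real.continuousAt_log (by norm_num)).comp (by fun_prop)
      · apply continuousAt_const.mul
        exact ContinuousAt.div (by fun_prop) (by fun_prop) (by simp [hb0.ne'])
    have := hK.tendsto.comp hc
    simp only [Function.comp_def] at this
    have heval : b / (b - 1) ^ 2 * (Real.log (0 + b) - Real.log (0 + 1)) + b / (b - 1) * (0 / (0 + b))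
        = b / (b - 1) ^ 2 * δ := by
      simp [hb, Real.log_exp]
    rw [heval] at this
    refine Tendsto.congr (fun z => (hGK z).symm) this
  have key := integral_of_hasDerivAt_of_tendsto hderiv hint hbot htop
  rw [hf'] at key
  rw [key]
  field_simp
end
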